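/- Let L be the non-abelian free Lie algebra over F_p on d ≥ 2 generators, regarded as an F_p-subalgebra of the free F_p[π]-Lie algebra Λ on the same d generators. Let M be a graded F_p-Lie subalgebra of L that has strong density dens_L(M) = 0 in L. Then the F_p[π]-Lie subalgebra H of Λ generated by M has strong density dens_Λ(H) = 0 in Λ. -/

import Mathlib

open Filter Topology
open scoped TensorProduct

/-- The free `F_p`-Lie algebra on `d` generators. -/
abbrev FreeL (p d : ℕ) := FreeLieAlgebra (ZMod p) (Fin d)

/-- The free `F_p[π]`-Lie algebra on `d` generators (base change of `FreeL p d`). -/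
abbrev FreeLam (p d : ℕ) := Polynomial (ZMod p) ⊗[ZMod p] FreeLieAlgebra (ZMod p) (Fin d)

/-- Auxiliary fold for left-normed Lie brackets. -/
noncomputable def lnbAux (p d : ℕ) (acc : FreeL p d) : List (Fin d) → FreeL p d
  | [] => acc
  | j :: w => lnbAux p d ⁅acc, FreeLieAlgebra.of (ZMod p) j⁆ w

/-- The left-normed Lie bracket `[[…[x_{i₁}, x_{i₂}], …], x_{iₙ}]` associated to a word
`i₁ i₂ … iₙ` in the generators. -/
noncomputable def listBracket (p d : ℕ) : List (Fin d) → FreeL p d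
  | [] => 0
  | i :: w => lnbAux p d (FreeLieAlgebra.of (ZMod p) i) w

/-- The `n`-th homogeneous component `L_n` of the free Lie algebra, w.r.t. the standard
grading by total degree in the generators: it is spanned by the left-normed brackets of
weight `n`. -/
noncomputable def Lcomp (p d : ℕ) (n : ℕ) : Submodule (ZMod p) (FreeL p d) :=
  Submodule.span (ZMod p)
    { x : FreeL p d | ∃ w : List (Fin d), w.length = n ∧ x = listBracket p d w }

/-- `J_m = ⊕_{n ≥ m} L_n`. -/
noncomputable def Jpiece (p d : ℕ) (m : ℕ) : Submodule (ZMod p) (FreeL p d) :=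
  ⨆ (n : ℕ) (_ : m ≤ n), Lcomp p d n

/-- The `n`-th homogeneous component `Λ_n = ⊕_{m=1}^{n} π^{n−m} L_m` of the free
`F_p[π]`-Lie algebra, where the generators and `π` have degree `1`. -/
noncomputable def Lamcomp (p d : ℕ) (n : ℕ) : Submodule (ZMod p) (FreeLam p d) :=
  Submodule.span (ZMod p)
    { z : FreeLam p d | ∃ m : ℕ, 1 ≤ m ∧ m ≤ n ∧ ∃ x ∈ Lcomp p d m,
        z = (Polynomial.X ^ (n - m) : Polynomial (ZMod p)) ⊗ₜ[ZMod p] x }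

/-- `I_m = ⊕_{n ≥ m} Λ_n`. -/
noncomputable def Ipiece (p d : ℕ) (m : ℕ) : Submodule (ZMod p) (FreeLam p d) :=
  ⨆ (n : ℕ) (_ : m ≤ n), Lamcomp p d n

/-- The density ratio `dim_{F_p}((M + J_n)/J_n) / dim_{F_p}(L/J_n)` at level `n`. -/
noncomputable def densLRatio (p d : ℕ) (M : Submodule (ZMod p) (FreeL p d)) (n : ℕ) : ℝ :=
  (Module.finrank (ZMod p) (M.map (Jpiece p d n).mkQ) : ℝ) /
    (Module.finrank (ZMod p) (FreeL p d ⧸ Jpiece p d n) : ℝ)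

/-- The density ratio `dim_{F_p}((H + I_n)/I_n) / dim_{F_p}(Λ/I_n)` at level `n`. -/
noncomputable def densLamRatio (p d : ℕ) (W : Submodule (ZMod p) (FreeLam p d)) (n : ℕ) : ℝ :=
  (Module.finrank (ZMod p) (W.map (Ipiece p d n).mkQ) : ℝ) /
    (Module.finrank (ZMod p) (FreeLam p d ⧸ Ipiece p d n) : ℝ)

/-- `dens_L(M) = liminf_n dim((M+J_n)/J_n)/dim(L/J_n)`. -/
noncomputable def densL (p d : ℕ) (M : Submodule (ZMod p) (FreeL p d)) : ℝ :=
  Filter.liminf (densLRatio p d M) Filter.atTop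

/-- `dens_Λ(H) = liminf_n dim((H+I_n)/I_n)/dim(Λ/I_n)`. -/
noncomputable def densLam (p d : ℕ) (W : Submodule (ZMod p) (FreeLam p d)) : ℝ :=
  Filter.liminf (densLamRatio p d W) Filter.atTop


section Aux

variable (p d : ℕ)

open FreeLieAlgebra

/-! ### Basic facts about left-normed brackets and the grading of `L` -/

lemma lnbAux_append (acc : FreeL p d) (w : List (Fin d)) (j : Fin d) :
    lnbAux p d acc (w ++ [j]) = ⁅lnbAux p d acc w, of (ZMod p) j⁆ := by
  induction w generalizing acc with
  | nil => rfl
  | cons i w ih => simp only [List.cons_append, lnbAux]; exact ih _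

lemma listBracket_append (w : List (Fin d)) (hw : w ≠ []) (j : Fin d) :
    listBracket p d (w ++ [j]) = ⁅listBracket p d w, of (ZMod p) j⁆ := by
  obtain ⟨i, w, rfl⟩ := List.exists_cons_of_ne_nil hw
  simp only [List.cons_append, listBracket]
  exact lnbAux_append p d _ _ _

lemma listBracket_mem (w : List (Fin d)) : listBracket p d w ∈ Lcomp p d w.length :=
  Submodule.subset_span ⟨w, rfl, rfl⟩

lemma Lcomp_zero : Lcomp p d 0 = ⊥ := by
  rw [Lcomp, eq_bot_iff, Submodule.span_le]
  rintro x ⟨w, hw, rfl⟩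
  rw [List.length_eq_zero_iff] at hw
  subst hw
  simp [listBracket]

lemma lie_of_mem_Lcomp {a : ℕ} {x : FreeL p d} (hx : x ∈ Lcomp p d a)
    (i : Fin d) : ⁅x, of (ZMod p) i⁆ ∈ Lcomp p d (a + 1) := by
  induction hx using Submodule.span_induction with
  | mem x hxw =>
    obtain ⟨w, hw, rfl⟩ := hxw
    rcases eq_or_ne w [] with rfl | hne
    · simp [listBracket]
    · rw [← listBracket_append p d w hne i]
      have := listBracket_mem p d (w ++ [i])
      simpa [hw] using this
  | zero => simp
  | add x y _ _ hx hy => rw [add_lie]; exact add_mem hx hy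
  | smul c x _ hx => rw [smul_lie]; exact Submodule.smul_mem _ _ hx

lemma lie_listBracket_mem (v : List (Fin d)) :
    ∀ (a : ℕ) (x : FreeL p d), x ∈ Lcomp p d a →
      ⁅x, listBracket p d v⁆ ∈ Lcomp p d (a + v.length) := by
  induction v using List.reverseRecOn with
  | nil => intro a x hx; simp [listBracket]
  | append_singleton u j ih =>
    intro a x hx
    rcases eq_or_ne u [] with rfl | hne
    · simpa [listBracket, lnbAux] using lie_of_mem_Lcomp p d hx j
    · rw [listBracket_append p d u hne j, leibniz_lie]
      have h1 : ⁅⁅x, listBracket p d u⁆, of (ZMod p) j⁆ ∈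
          Lcomp p d (a + (u ++ [j]).length) := by
        have := lie_of_mem_Lcomp p d (ih a x hx) j
        convert this using 2
        simp; ring
      have h2 : ⁅listBracket p d u, ⁅x, of (ZMod p) j⁆⁆ ∈
          Lcomp p d (a + (u ++ [j]).length) := by
        have h2' := ih (a + 1) _ (lie_of_mem_Lcomp p d hx j)
        have heq : a + (u ++ [j]).length = a + 1 + u.length := by simp; ring
        rw [heq, ← lie_skew]
        exact neg_mem h2'
      exact add_mem h1 h2

lemma bracket_mem_Lcomp {a b : ℕ} {x y : FreeL p d}
    (hx : x ∈ Lcomp p d a) (hy : y ∈ Lcomp p d b) : ⁅x, y⁆ ∈ Lcomp p d (a + b) := by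
  induction hy using Submodule.span_induction with
  | mem y hyw =>
    obtain ⟨w, hw, rfl⟩ := hyw
    have := lie_listBracket_mem p d w a x hx
    rwa [hw] at this
  | zero => simp
  | add y z _ _ hy hz => rw [lie_add]; exact add_mem hy hz
  | smul c y _ hy => rw [lie_smul]; exact Submodule.smul_mem _ _ hy

lemma iSup_Lcomp_eq_top : (⨆ n : ℕ, Lcomp p d n) = ⊤ := by
  set T : Submodule (ZMod p) (FreeL p d) := ⨆ n : ℕ, Lcomp p d n with hT
  have hlie : ∀ x ∈ T, ∀ y ∈ T, ⁅x, y⁆ ∈ T := by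
    intro x hx y hy
    refine Submodule.iSup_induction (motive := fun x => ⁅x, y⁆ ∈ T) _ hx ?_ (by simp) ?_
    · intro a x hxa
      refine Submodule.iSup_induction (motive := fun y => ⁅x, y⁆ ∈ T) _ hy ?_ (by simp) ?_
      · intro b y hyb
        exact Submodule.mem_iSup_of_mem (a + b) (bracket_mem_Lcomp p d hxa hyb)
      · intro y z hy hz
        rw [lie_add]; exact add_mem hy hz
    · intro x z hx hz
      rw [add_lie]; exact add_mem hx hz
  have hof : ∀ i, of (ZMod p) i ∈ T := by
    intro i
    refine Submodule.mem_iSup_of_mem 1 ?_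
    have := listBracket_mem p d [i]
    simpa [listBracket, lnbAux] using this
  let K : LieSubalgebra (ZMod p) (FreeL p d) :=
    { T with lie_mem' := fun {x y} hx hy => hlie x hx y hy }
  have hK : ∀ x, x ∈ K := by
    intro x
    let f : FreeL p d →ₗ⁅ZMod p⁆ K :=
      FreeLieAlgebra.lift (ZMod p) (fun i => ⟨of (ZMod p) i, hof i⟩)
    have hcomp : (K.incl.comp f) = LieHom.id := by
      apply FreeLieAlgebra.hom_ext
      intro i
      simp [f]
    have h2 := LieHom.congr_fun hcomp x
    simp only [LieHom.coe_comp, Function.comp_apply, LieHom.id_apply,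
      LieSubalgebra.coe_incl] at h2
    rw [← h2]
    exact (f x).2
  exact Submodule.eq_top_iff'.2 hK

/-! ### The auxiliary maps `Φ`, `ε_k`, `π_k`, `ρ_{k,m}` -/

noncomputable instance : LieAlgebra (ZMod p) (FreeLam p d) :=
  { lie_smul := fun c x y => by
      rw [← algebraMap_smul (Polynomial (ZMod p)) c y]
      rw [lie_smul ((algebraMap (ZMod p) (Polynomial (ZMod p))) c) x y]
      rw [algebraMap_smul] }

noncomputable def Phi : FreeL p d →ₗ⁅ZMod p⁆ FreeLam p d :=
  FreeLieAlgebra.lift (ZMod p)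
    (fun i => (Polynomial.X : Polynomial (ZMod p)) ⊗ₜ[ZMod p] of (ZMod p) i)

noncomputable def epsK (k : ℕ) : FreeLam p d →ₗ[ZMod p] FreeL p d :=
  (TensorProduct.lid (ZMod p) (FreeL p d)).toLinearMap ∘ₗ
    (TensorProduct.map (Polynomial.lcoeff (ZMod p) k) LinearMap.id)

lemma epsK_tmul (k : ℕ) (f : Polynomial (ZMod p)) (x : FreeL p d) :
    epsK p d k (f ⊗ₜ x) = f.coeff k • x := by
  simp [epsK, Polynomial.lcoeff_apply]

noncomputable def piK (k : ℕ) : FreeL p d →ₗ[ZMod p] FreeL p d :=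
  (epsK p d k) ∘ₗ (Phi p d).toLinearMap

lemma Phi_of (i : Fin d) :
    Phi p d (of (ZMod p) i) =
      (Polynomial.X : Polynomial (ZMod p)) ⊗ₜ[ZMod p] of (ZMod p) i := by
  simp [Phi]

lemma Phi_lnbAux (w : List (Fin d)) : ∀ (n : ℕ) (acc : FreeL p d),
    Phi p d acc = (Polynomial.X ^ n : Polynomial (ZMod p)) ⊗ₜ[ZMod p] acc →
    Phi p d (lnbAux p d acc w) =
      (Polynomial.X ^ (n + w.length) : Polynomial (ZMod p)) ⊗ₜ[ZMod p] lnbAux p d acc w := by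
  induction w with
  | nil => intro n acc h; simpa [lnbAux] using h
  | cons j w ih =>
    intro n acc h
    simp only [lnbAux]
    have hstep : Phi p d ⁅acc, of (ZMod p) j⁆ =
        (Polynomial.X ^ (n+1) : Polynomial (ZMod p)) ⊗ₜ[ZMod p] ⁅acc, of (ZMod p) j⁆ := by
      rw [LieHom.map_lie, h, Phi_of, LieAlgebra.ExtendScalars.bracket_tmul]
      ring_nf
    have h2 := ih (n+1) _ hstep
    rw [h2]
    congr 1
    simp [List.length_cons]
    ring_nf

lemma Phi_listBracket (w : List (Fin d)) :
    Phi p d (listBracket p d w) =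
      (Polynomial.X ^ w.length : Polynomial (ZMod p)) ⊗ₜ[ZMod p] listBracket p d w := by
  cases w with
  | nil => simp [listBracket]
  | cons i w =>
    simp only [listBracket]
    have := Phi_lnbAux p d w 1 (of (ZMod p) i) (by rw [Phi_of]; ring_nf)
    rw [this]
    congr 1
    simp [List.length_cons]
    ring_nf

lemma piK_of_mem_Lcomp {m : ℕ} {x : FreeL p d} (hx : x ∈ Lcomp p d m) (k : ℕ) :
    piK p d k x = if m = k then x else 0 := by
  induction hx using Submodule.span_induction with
  | mem x hxw =>
    obtain ⟨w, hw, rfl⟩ := hxw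
    subst hw
    simp only [piK, LinearMap.comp_apply, LieHom.coe_toLinearMap, Phi_listBracket, epsK_tmul,
      Polynomial.coeff_X_pow]
    rcases eq_or_ne k w.length with h | h
    · subst h; simp
    · rw [if_neg h, if_neg (Ne.symm h), zero_smul]
  | zero => simp
  | add x y _ _ hx hy => rw [map_add, hx, hy]; split <;> simp
  | smul c x _ hx => rw [map_smul, hx]; split <;> simp

lemma piK_eq_self {m : ℕ} {x : FreeL p d} (hx : x ∈ Lcomp p d m) : piK p d m x = x := by
  simp [piK_of_mem_Lcomp p d hx]

lemma piK_eq_zero {m k : ℕ} (hmk : m ≠ k) {x : FreeL p d} (hx : x ∈ Lcomp p d m) :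
    piK p d k x = 0 := by
  simp [piK_of_mem_Lcomp p d hx, hmk]

lemma piK_mem_Lcomp (k : ℕ) (x : FreeL p d) : piK p d k x ∈ Lcomp p d k := by
  have hx : x ∈ (⨆ n : ℕ, Lcomp p d n) := by rw [iSup_Lcomp_eq_top]; trivial
  refine Submodule.iSup_induction (motive := fun x => piK p d k x ∈ Lcomp p d k) _ hx ?_ (by simp) ?_
  · intro m x hxm
    rw [piK_of_mem_Lcomp p d hxm]
    split
    · subst ‹m = k›; exact hxm
    · simp
  · intro x y hx hy
    rw [map_add]; exact add_mem hx hy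

lemma piK_Jpiece {k n : ℕ} (hk : k < n) {x : FreeL p d} (hx : x ∈ Jpiece p d n) :
    piK p d k x = 0 := by
  have : Jpiece p d n ≤ LinearMap.ker (piK p d k) := by
    refine iSup_le fun m => iSup_le fun hm => ?_
    intro x hx
    exact piK_eq_zero p d (by omega) hx
  exact this hx

end Aux


section Aux2

variable (p d : ℕ) [Fact p.Prime]

open FreeLieAlgebra Polynomial

/-! ### The maps `τ_k`, `ρ_{k,m}` and basic facts about `Λ` -/

/-- `τ_k x = X^k ⊗ x`. -/
noncomputable def tauK (k : ℕ) : FreeL p d →ₗ[ZMod p] FreeLam p d :=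
  TensorProduct.mk (ZMod p) (Polynomial (ZMod p)) (FreeL p d) (X ^ k)

lemma tauK_apply (k : ℕ) (x : FreeL p d) :
    tauK p d k x = (X ^ k : Polynomial (ZMod p)) ⊗ₜ[ZMod p] x := rfl

/-- `ρ_{k,m}`: extract the coefficient of `X^k` and then the degree-`m` component. -/
noncomputable def rhoKM (k m : ℕ) : FreeLam p d →ₗ[ZMod p] FreeL p d :=
  (piK p d m) ∘ₗ (epsK p d k)

lemma rhoKM_tauK {k j m : ℕ} (x : FreeL p d) :
    rhoKM p d k m (tauK p d j x) = if j = k then piK p d m x else 0 := by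
  simp only [rhoKM, tauK_apply, LinearMap.comp_apply, epsK_tmul, coeff_X_pow]
  rcases eq_or_ne j k with rfl | h
  · simp
  · rw [if_neg (fun hh => h hh.symm), if_neg h, zero_smul, map_zero]

lemma rhoKM_mem_Lcomp (k m : ℕ) (z : FreeLam p d) : rhoKM p d k m z ∈ Lcomp p d m :=
  piK_mem_Lcomp p d m _

lemma rhoKM_Lamcomp_eq_zero {k m n' : ℕ} (h : k + m < n') {z : FreeLam p d}
    (hz : z ∈ Lamcomp p d n') : rhoKM p d k m z = 0 := by
  induction hz using Submodule.span_induction with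
  | mem z hzw =>
    obtain ⟨m', hm'1, hm'n, x, hx, rfl⟩ := hzw
    simp only [rhoKM, LinearMap.comp_apply, epsK_tmul, coeff_X_pow]
    split
    · rename_i hk
      rcases eq_or_ne m' m with rfl | hne
      · omega
      · simp [piK_eq_zero p d hne hx]
    · simp
  | zero => simp
  | add x y _ _ hx hy => rw [map_add, hx, hy, add_zero]
  | smul c x _ hx => rw [map_smul, hx, smul_zero]

lemma rhoKM_Ipiece_eq_zero {k m n : ℕ} (h : k + m + 1 ≤ n) {z : FreeLam p d}
    (hz : z ∈ Ipiece p d n) : rhoKM p d k m z = 0 := by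
  have hle : Ipiece p d n ≤ LinearMap.ker (rhoKM p d k m) := by
    refine iSup_le fun n' => iSup_le fun hn' => fun z hz => ?_
    exact rhoKM_Lamcomp_eq_zero p d (by omega) hz
  exact hle hz

lemma tauK_Lcomp_le_Lamcomp {k m : ℕ} (hm : 1 ≤ m) :
    (Lcomp p d m).map (tauK p d k) ≤ Lamcomp p d (k + m) := by
  rintro z ⟨x, hx, rfl⟩
  exact Submodule.subset_span ⟨m, hm, by omega, x, hx, by rw [tauK_apply]; congr 2; omega⟩

lemma tauK_mem_iSup {T : Submodule (ZMod p) (FreeLam p d)}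
    (hT : ∀ (k m : ℕ), (Lcomp p d m).map (tauK p d k) ≤ T) (k : ℕ) (x : FreeL p d) :
    tauK p d k x ∈ T := by
  have hx : x ∈ (⨆ n : ℕ, Lcomp p d n) := by rw [iSup_Lcomp_eq_top]; trivial
  refine Submodule.iSup_induction (motive := fun x => tauK p d k x ∈ T) _ hx ?_ (by simp) ?_
  · intro m x hxm
    exact hT k m ⟨x, hxm, rfl⟩
  · intro x y hx hy
    rw [map_add]; exact add_mem hx hy

lemma tmul_mem_of_tauK {T : Submodule (ZMod p) (FreeLam p d)}
    (hT : ∀ (k m : ℕ), (Lcomp p d m).map (tauK p d k) ≤ T) (f : Polynomial (ZMod p))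
    (x : FreeL p d) : f ⊗ₜ[ZMod p] x ∈ T := by
  have hf : f ⊗ₜ[ZMod p] x = ∑ k ∈ f.support, (f.coeff k) • ((X ^ k : Polynomial (ZMod p)) ⊗ₜ[ZMod p] x) := by
    conv_lhs => rw [f.as_sum_support]
    rw [TensorProduct.sum_tmul]
    refine Finset.sum_congr rfl fun k _ => ?_
    rw [TensorProduct.smul_tmul', ← Polynomial.smul_X_eq_monomial]
  rw [hf]
  exact Submodule.sum_mem _ fun k _ => Submodule.smul_mem _ _ (tauK_mem_iSup p d hT k x)

lemma eq_top_of_tauK {T : Submodule (ZMod p) (FreeLam p d)}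
    (hT : ∀ (k m : ℕ), (Lcomp p d m).map (tauK p d k) ≤ T) : T = ⊤ := by
  rw [eq_top_iff]
  rintro z -
  induction z using TensorProduct.induction_on with
  | zero => simp
  | tmul f x => exact tmul_mem_of_tauK p d hT f x
  | add x y hx hy => exact add_mem hx hy

/-! ### Finite-dimensionality -/

instance Lcomp_finiteDimensional (m : ℕ) : FiniteDimensional (ZMod p) (Lcomp p d m) := by
  have : {x : FreeL p d | ∃ w : List (Fin d), w.length = m ∧ x = listBracket p d w} ⊆
      (fun w => listBracket p d w) '' {w : List (Fin d) | w.length = m} := by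
    rintro x ⟨w, hw, rfl⟩; exact ⟨w, hw, rfl⟩
  have hfin : {x : FreeL p d | ∃ w : List (Fin d), w.length = m ∧ x = listBracket p d w}.Finite :=
    Set.Finite.subset (Set.Finite.image _ (List.finite_length_eq (Fin d) m)) this
  exact FiniteDimensional.span_of_finite _ hfin

instance quotJ_finiteDimensional (n : ℕ) :
    FiniteDimensional (ZMod p) (FreeL p d ⧸ Jpiece p d n) := by
  have h1 : (⊤ : Submodule (ZMod p) (FreeL p d ⧸ Jpiece p d n)) ≤
      (Finset.range n).sup (fun m => (Lcomp p d m).map (Jpiece p d n).mkQ) := by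
    have htop : Submodule.map (Jpiece p d n).mkQ ⊤ = ⊤ := by
      rw [Submodule.map_top, Submodule.range_mkQ]
    rw [← htop, ← iSup_Lcomp_eq_top p d, Submodule.map_iSup]
    refine iSup_le fun m => ?_
    rcases lt_or_ge m n with hm | hm
    · exact Finset.le_sup (f := fun m => (Lcomp p d m).map (Jpiece p d n).mkQ)
        (Finset.mem_range.2 hm)
    · have : Lcomp p d m ≤ Jpiece p d n := le_iSup₂ (f := fun n' (_ : n ≤ n') => Lcomp p d n') m hm
      have hz : (Lcomp p d m).map (Jpiece p d n).mkQ = ⊥ := by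
        rw [Submodule.eq_bot_iff]
        rintro z ⟨x, hx, rfl⟩
        rw [Submodule.mkQ_apply, Submodule.Quotient.mk_eq_zero]
        exact this hx
      rw [hz]; exact bot_le
  have : FiniteDimensional (ZMod p)
      (↥((Finset.range n).sup (fun m => (Lcomp p d m).map (Jpiece p d n).mkQ))) :=
    Submodule.finiteDimensional_finset_sup _ _
  have h2 : FiniteDimensional (ZMod p) (⊤ : Submodule (ZMod p) (FreeL p d ⧸ Jpiece p d n)) :=
    Submodule.finiteDimensional_of_le h1
  exact (Submodule.topEquiv (R := ZMod p) (M := FreeL p d ⧸ Jpiece p d n)).finiteDimensional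

instance Lamcomp_finiteDimensional (n' : ℕ) :
    FiniteDimensional (ZMod p) (Lamcomp p d n') := by
  have h : Lamcomp p d n' ≤
      (Finset.Icc 1 n').sup (fun m => (Lcomp p d m).map (tauK p d (n' - m))) := by
    rw [Lamcomp, Submodule.span_le]
    rintro z ⟨m, hm1, hmn, x, hx, rfl⟩
    have : ((X : Polynomial (ZMod p)) ^ (n' - m)) ⊗ₜ[ZMod p] x ∈
        (Lcomp p d m).map (tauK p d (n' - m)) := ⟨x, hx, rfl⟩
    exact (Finset.le_sup (f := fun m => (Lcomp p d m).map (tauK p d (n' - m)))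
      (Finset.mem_Icc.2 ⟨hm1, hmn⟩)) this
  have : FiniteDimensional (ZMod p)
      (↥((Finset.Icc 1 n').sup (fun m => (Lcomp p d m).map (tauK p d (n' - m))))) :=
    Submodule.finiteDimensional_finset_sup _ _
  exact Submodule.finiteDimensional_of_le h

lemma iSup_Lamcomp_eq_top : (⨆ n : ℕ, Lamcomp p d n) = ⊤ := by
  refine eq_top_of_tauK p d fun k m => ?_
  rcases Nat.eq_zero_or_pos m with rfl | hm
  · rw [Lcomp_zero, Submodule.map_bot]
    exact bot_le
  · exact le_trans (tauK_Lcomp_le_Lamcomp p d hm) (le_iSup _ (k + m))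

instance quotI_finiteDimensional (n : ℕ) :
    FiniteDimensional (ZMod p) (FreeLam p d ⧸ Ipiece p d n) := by
  have h1 : (⊤ : Submodule (ZMod p) (FreeLam p d ⧸ Ipiece p d n)) ≤
      (Finset.range n).sup (fun m => (Lamcomp p d m).map (Ipiece p d n).mkQ) := by
    have htop : Submodule.map (Ipiece p d n).mkQ ⊤ = ⊤ := by
      rw [Submodule.map_top, Submodule.range_mkQ]
    rw [← htop, ← iSup_Lamcomp_eq_top p d, Submodule.map_iSup]
    refine iSup_le fun m => ?_
    rcases lt_or_ge m n with hm | hm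
    · exact Finset.le_sup (f := fun m => (Lamcomp p d m).map (Ipiece p d n).mkQ)
        (Finset.mem_range.2 hm)
    · have : Lamcomp p d m ≤ Ipiece p d n := le_iSup₂ (f := fun n' (_ : n ≤ n') => Lamcomp p d n') m hm
      have hz : (Lamcomp p d m).map (Ipiece p d n).mkQ = ⊥ := by
        rw [Submodule.eq_bot_iff]
        rintro z ⟨x, hx, rfl⟩
        rw [Submodule.mkQ_apply, Submodule.Quotient.mk_eq_zero]
        exact this hx
      rw [hz]; exact bot_le
  have : FiniteDimensional (ZMod p)
      (↥((Finset.range n).sup (fun m => (Lamcomp p d m).map (Ipiece p d n).mkQ))) :=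
    Submodule.finiteDimensional_finset_sup _ _
  have h2 : FiniteDimensional (ZMod p) (⊤ : Submodule (ZMod p) (FreeLam p d ⧸ Ipiece p d n)) :=
    Submodule.finiteDimensional_of_le h1
  exact (Submodule.topEquiv (R := ZMod p) (M := FreeLam p d ⧸ Ipiece p d n)).finiteDimensional

end Aux2


section Aux3

variable (p d : ℕ) [Fact p.Prime]

open FreeLieAlgebra Polynomial Module

instance inf_Lcomp_finiteDimensional (Msub : Submodule (ZMod p) (FreeL p d)) (m : ℕ) :
    FiniteDimensional (ZMod p) ↥(Msub ⊓ Lcomp p d m) :=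
  Submodule.finiteDimensional_of_le inf_le_right

lemma of_ne_zero (i : Fin d) : FreeLieAlgebra.of (ZMod p) i ≠ 0 := by
  intro h
  letI := LieRing.ofAssociativeRing (A := ZMod p)
  have h2 := congrArg (FreeLieAlgebra.lift (ZMod p) (fun _ : Fin d => (1 : ZMod p))) h
  rw [FreeLieAlgebra.lift_of_apply, map_zero] at h2
  exact one_ne_zero h2

lemma one_le_a (hd : 1 ≤ d) : 1 ≤ finrank (ZMod p) (Lcomp p d 1) := by
  have hmem : FreeLieAlgebra.of (ZMod p) ⟨0, hd⟩ ∈ Lcomp p d 1 := by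
    have := listBracket_mem p d [⟨0, hd⟩]
    simpa [listBracket, lnbAux] using this
  have : Nontrivial ↥(Lcomp p d 1) :=
    ⟨⟨⟨_, hmem⟩, 0, by
      intro h
      exact of_ne_zero p d ⟨0, hd⟩ (congrArg Subtype.val h)⟩⟩
  exact Module.finrank_pos_iff.2 this

/-- Auxiliary: sum of finranks bounds the finrank of a finite sup. -/
lemma finrank_finset_sup_le {V : Type*} [AddCommGroup V] [Module (ZMod p) V] {ι : Type*}
    (s : Finset ι) (f : ι → Submodule (ZMod p) V) [∀ i, FiniteDimensional (ZMod p) (f i)] :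
    finrank (ZMod p) ↥(s.sup f) ≤ ∑ i ∈ s, finrank (ZMod p) ↥(f i) := by
  classical
  induction s using Finset.induction_on with
  | empty => simp
  | insert _ _ hnotmem ih =>
    rename_i a s
    rw [Finset.sup_insert, Finset.sum_insert hnotmem]
    have h1 := Submodule.finrank_sup_add_finrank_inf_eq (f a) (s.sup f)
    omega

/-- The `L`-side spanning bound (F4): `dim (L / J_n) ≤ ∑_{m < n} a_m`. -/
lemma c_le_sum_a (n : ℕ) :
    finrank (ZMod p) (FreeL p d ⧸ Jpiece p d n) ≤
      ∑ m ∈ Finset.range n, finrank (ZMod p) (Lcomp p d m) := by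
  have h1 : (⊤ : Submodule (ZMod p) (FreeL p d ⧸ Jpiece p d n)) ≤
      (Finset.range n).sup (fun m => (Lcomp p d m).map (Jpiece p d n).mkQ) := by
    have htop : Submodule.map (Jpiece p d n).mkQ ⊤ = ⊤ := by
      rw [Submodule.map_top, Submodule.range_mkQ]
    rw [← htop, ← iSup_Lcomp_eq_top p d, Submodule.map_iSup]
    refine iSup_le fun m => ?_
    rcases lt_or_ge m n with hm | hm
    · exact Finset.le_sup (f := fun m => (Lcomp p d m).map (Jpiece p d n).mkQ)
        (Finset.mem_range.2 hm)
    · have hle : Lcomp p d m ≤ Jpiece p d n :=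
        le_iSup₂ (f := fun n' (_ : n ≤ n') => Lcomp p d n') m hm
      have hz : (Lcomp p d m).map (Jpiece p d n).mkQ = ⊥ := by
        rw [Submodule.eq_bot_iff]
        rintro z ⟨x, hx, rfl⟩
        rw [Submodule.mkQ_apply, Submodule.Quotient.mk_eq_zero]
        exact hle hx
      rw [hz]; exact bot_le
  calc finrank (ZMod p) (FreeL p d ⧸ Jpiece p d n)
      = finrank (ZMod p) (⊤ : Submodule (ZMod p) (FreeL p d ⧸ Jpiece p d n)) :=
        (finrank_top _ _).symm
    _ ≤ finrank (ZMod p)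
        ↥((Finset.range n).sup (fun m => (Lcomp p d m).map (Jpiece p d n).mkQ)) :=
        Submodule.finrank_mono h1
    _ ≤ ∑ m ∈ Finset.range n, finrank (ZMod p) ↥((Lcomp p d m).map (Jpiece p d n).mkQ) :=
        finrank_finset_sup_le p _ _
    _ ≤ ∑ m ∈ Finset.range n, finrank (ZMod p) ↥(Lcomp p d m) :=
        Finset.sum_le_sum fun m _ => Submodule.finrank_map_le _ _

/-- The `L`-side independence bound (F3): `∑_{m < n} b_m ≤ dim ((M + J_n)/J_n)`. -/
lemma sum_b_le_r (n : ℕ) (Msub : Submodule (ZMod p) (FreeL p d)) :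
    ∑ m ∈ Finset.range n, finrank (ZMod p) ↥(Msub ⊓ Lcomp p d m) ≤
      finrank (ZMod p) ↥(Msub.map (Jpiece p d n).mkQ) := by
  classical
  let g0 : (∀ m : Fin n, ↥(Msub ⊓ Lcomp p d (m : ℕ))) →ₗ[ZMod p] FreeL p d :=
    { toFun := fun f => ∑ m, ((f m : FreeL p d))
      map_add' := fun f g => by simp [Finset.sum_add_distrib]
      map_smul' := fun c f => by simp [Finset.smul_sum] }
  let g : (∀ m : Fin n, ↥(Msub ⊓ Lcomp p d (m : ℕ))) →ₗ[ZMod p] (FreeL p d ⧸ Jpiece p d n) :=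
    (Jpiece p d n).mkQ ∘ₗ g0
  have hrange : ∀ f, g f ∈ Msub.map (Jpiece p d n).mkQ := fun f =>
    ⟨∑ m, ((f m : FreeL p d)), Submodule.sum_mem _ (fun m _ => (f m).2.1), rfl⟩
  let g' := g.codRestrict (Msub.map (Jpiece p d n).mkQ) hrange
  have hinj : Function.Injective g' := by
    rw [← LinearMap.ker_eq_bot, LinearMap.ker_eq_bot']
    intro f hf
    have hf2 : (∑ m, ((f m : FreeL p d))) ∈ Jpiece p d n := by
      have := congrArg Subtype.val hf
      have h' : g0 f ∈ Jpiece p d n := by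
        simpa [g', g, LinearMap.codRestrict, Submodule.Quotient.mk_eq_zero] using this
      exact h'
    funext k
    have hk : piK p d (k : ℕ) (∑ m, ((f m : FreeL p d))) = (f k : FreeL p d) := by
      rw [map_sum]
      rw [Finset.sum_eq_single k]
      · exact piK_eq_self p d (f k).2.2
      · intro m _ hmk
        exact piK_eq_zero p d (fun h => hmk (Fin.ext h)) (f m).2.2
      · intro h; exact absurd (Finset.mem_univ k) h
    have hz := piK_Jpiece p d (k.isLt) hf2
    rw [hk] at hz
    exact Subtype.ext hz
  haveI : FiniteDimensional (ZMod p) ↥(Msub.map (Jpiece p d n).mkQ) :=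
    FiniteDimensional.finiteDimensional_submodule _
  have hle := LinearMap.finrank_le_finrank_of_injective hinj
  rw [Module.finrank_pi_fintype] at hle
  rw [← Fin.sum_univ_eq_sum_range (fun m => finrank (ZMod p) ↥(Msub ⊓ Lcomp p d m)) n]
  exact hle

end Aux3


section Aux4

variable (p d : ℕ) [Fact p.Prime]

open FreeLieAlgebra Polynomial Module

/-- The index type of pairs `(k, m)` with `k + m < n`. -/
abbrev PairIdx (n : ℕ) := {s : Fin n × Fin n // (s.1 : ℕ) + (s.2 : ℕ) + 1 ≤ n}

/-- The `Λ`-side independence bound (F2):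
`∑_{j < n} ∑_{m ≤ j} a_m ≤ dim (Λ / I_n)`. -/
lemma sum_a_le_den (n : ℕ) :
    ∑ j ∈ Finset.range n, ∑ m ∈ Finset.range (j + 1), finrank (ZMod p) ↥(Lcomp p d m) ≤
      finrank (ZMod p) (FreeLam p d ⧸ Ipiece p d n) := by
  classical
  let W : FreeLam p d →ₗ[ZMod p] (∀ i : PairIdx n, ↥(Lcomp p d (i.1.2 : ℕ))) :=
    LinearMap.pi (fun i => LinearMap.codRestrict _ (rhoKM p d (i.1.1 : ℕ) (i.1.2 : ℕ))
      (fun z => rhoKM_mem_Lcomp p d _ _ z))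
  have hker : Ipiece p d n ≤ LinearMap.ker W := by
    intro z hz
    rw [LinearMap.mem_ker]
    funext i
    exact Subtype.ext (rhoKM_Ipiece_eq_zero p d i.2 hz)
  let q := (Ipiece p d n).liftQ W hker
  have hsurj : Function.Surjective q := by
    intro f
    refine ⟨(Ipiece p d n).mkQ (∑ i : PairIdx n, tauK p d (i.1.1 : ℕ) ((f i : FreeL p d))), ?_⟩
    have hq : ∀ z, q ((Ipiece p d n).mkQ z) = W z := fun z => rfl
    rw [hq]
    funext i'
    apply Subtype.ext
    have : W (∑ i : PairIdx n, tauK p d (i.1.1 : ℕ) ((f i : FreeL p d))) i' =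
        ∑ i : PairIdx n, rhoKM p d (i'.1.1 : ℕ) (i'.1.2 : ℕ) (tauK p d (i.1.1 : ℕ) ((f i : FreeL p d))) := by
      simp [W, LinearMap.pi_apply, map_sum]
    rw [this]
    rw [Finset.sum_eq_single i']
    · rw [rhoKM_tauK, if_pos rfl, piK_eq_self p d (f i').2]
    · intro i _ hii
      rw [rhoKM_tauK]
      rcases eq_or_ne (i.1.1 : ℕ) (i'.1.1 : ℕ) with hk | hk
      · rw [if_pos hk]
        have hm : (i.1.2 : ℕ) ≠ (i'.1.2 : ℕ) := by
          intro hm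
          apply hii
          apply Subtype.ext
          apply Prod.ext
          · exact Fin.ext hk
          · exact Fin.ext hm
        exact piK_eq_zero p d hm (f i).2
      · rw [if_neg hk]
    · intro h; exact absurd (Finset.mem_univ i') h
  have hfr : finrank (ZMod p) (∀ i : PairIdx n, ↥(Lcomp p d (i.1.2 : ℕ))) ≤
      finrank (ZMod p) (FreeLam p d ⧸ Ipiece p d n) := by
    have h1 : LinearMap.range q = ⊤ := LinearMap.range_eq_top.2 hsurj
    have h2 := LinearMap.finrank_range_le q
    rw [h1, finrank_top] at h2
    exact h2
  rw [Module.finrank_pi_fintype] at hfr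
  refine le_trans (le_of_eq ?_) hfr
  rcases Nat.eq_zero_or_pos n with rfl | hn
  · simp
  rw [← Finset.sum_sigma (Finset.range n) (fun j => Finset.range (j + 1))
    (fun x => finrank (ZMod p) ↥(Lcomp p d x.2))]
  rw [← Finset.sum_subtype (Finset.univ.filter
      (fun s : Fin n × Fin n => (s.1 : ℕ) + (s.2 : ℕ) + 1 ≤ n))
    (fun s => by simp) (fun s : Fin n × Fin n => finrank (ZMod p) ↥(Lcomp p d (s.2 : ℕ)))]
  refine Finset.sum_nbij'
    (i := fun x : Σ _ : ℕ, ℕ => ((⟨(x.1 - x.2) % n, Nat.mod_lt _ hn⟩, ⟨x.2 % n, Nat.mod_lt _ hn⟩) :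
      Fin n × Fin n))
    (j := fun s : Fin n × Fin n => (⟨(s.1 : ℕ) + (s.2 : ℕ), (s.2 : ℕ)⟩ : Σ _ : ℕ, ℕ))
    ?_ ?_ ?_ ?_ ?_
  · rintro ⟨j, m⟩ hx
    simp only [Finset.mem_sigma, Finset.mem_range] at hx
    simp only [Finset.mem_filter, Finset.mem_univ, true_and]
    have h1 : (j - m) % n = j - m := Nat.mod_eq_of_lt (by omega)
    have h2 : m % n = m := Nat.mod_eq_of_lt (by omega)
    simp only [h1, h2]
    omega
  · rintro ⟨k, m⟩ hs
    simp only [Finset.mem_filter, Finset.mem_univ, true_and] at hs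
    simp only [Finset.mem_sigma, Finset.mem_range]
    omega
  · rintro ⟨j, m⟩ hx
    simp only [Finset.mem_sigma, Finset.mem_range] at hx
    have h1 : (j - m) % n = j - m := Nat.mod_eq_of_lt (by omega)
    have h2 : m % n = m := Nat.mod_eq_of_lt (by omega)
    simp only [h1, h2]
    congr 1 <;> omega
  · rintro ⟨k, m⟩ hs
    simp only [Finset.mem_filter, Finset.mem_univ, true_and] at hs
    have h1 : ((k : ℕ) + (m : ℕ) - (m : ℕ)) % n = (k : ℕ) := by
      rw [Nat.add_sub_cancel]; exact Nat.mod_eq_of_lt k.isLt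
    have h2 : (m : ℕ) % n = (m : ℕ) := Nat.mod_eq_of_lt m.isLt
    ext <;> simp [Nat.mod_eq_of_lt k.isLt, Nat.mod_eq_of_lt m.isLt, Nat.add_sub_cancel]
  · rintro ⟨j, m⟩ hx
    simp only [Finset.mem_sigma, Finset.mem_range] at hx
    have h2 : m % n = m := Nat.mod_eq_of_lt (by omega)
    have : (((fun x : Σ _ : ℕ, ℕ => ((⟨(x.1 - x.2) % n, Nat.mod_lt _ hn⟩, ⟨x.2 % n, Nat.mod_lt _ hn⟩) :
        Fin n × Fin n)) ⟨j, m⟩).2 : ℕ) = m := h2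
    rw [this]

end Aux4


section Aux5

variable (p d : ℕ) [Fact p.Prime]

open FreeLieAlgebra Polynomial Module

/-- The enveloping `F_p`-submodule `S' = ∑_{k,m} X^k ⊗ (M ∩ L_m)` of `Λ`. -/
noncomputable def Sprime (Msub : Submodule (ZMod p) (FreeL p d)) :
    Submodule (ZMod p) (FreeLam p d) :=
  ⨆ km : ℕ × ℕ, ((Msub ⊓ Lcomp p d km.2).map (tauK p d km.1))

lemma tmul_mem_Sprime_of_inf {Msub : Submodule (ZMod p) (FreeL p d)} {m : ℕ} {x : FreeL p d}
    (hx : x ∈ Msub ⊓ Lcomp p d m) (g : Polynomial (ZMod p)) :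
    g ⊗ₜ[ZMod p] x ∈ Sprime p d Msub := by
  have hg : g ⊗ₜ[ZMod p] x =
      ∑ k ∈ g.support, (g.coeff k) • ((X ^ k : Polynomial (ZMod p)) ⊗ₜ[ZMod p] x) := by
    conv_lhs => rw [g.as_sum_support]
    rw [TensorProduct.sum_tmul]
    refine Finset.sum_congr rfl fun k _ => ?_
    rw [TensorProduct.smul_tmul', ← Polynomial.smul_X_eq_monomial]
  rw [hg]
  refine Submodule.sum_mem _ fun k _ => Submodule.smul_mem _ _ ?_
  exact le_iSup (fun km : ℕ × ℕ => ((Msub ⊓ Lcomp p d km.2).map (tauK p d km.1))) (k, m)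
    ⟨x, hx, rfl⟩

lemma tmul_mem_Sprime {Msub : Submodule (ZMod p) (FreeL p d)}
    (hgr : Msub ≤ ⨆ m : ℕ, Msub ⊓ Lcomp p d m) {x : FreeL p d} (hx : x ∈ Msub)
    (g : Polynomial (ZMod p)) : g ⊗ₜ[ZMod p] x ∈ Sprime p d Msub := by
  have hx2 : x ∈ ⨆ m : ℕ, Msub ⊓ Lcomp p d m := hgr hx
  refine Submodule.iSup_induction (motive := fun x => g ⊗ₜ[ZMod p] x ∈ Sprime p d Msub) _ hx2
    ?_ (by simp only [TensorProduct.tmul_zero]; exact zero_mem _) ?_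
  · intro m x hxm
    exact tmul_mem_Sprime_of_inf p d hxm g
  · intro x y hx hy
    rw [TensorProduct.tmul_add]; exact add_mem hx hy

lemma smul_mem_Sprime {Msub : Submodule (ZMod p) (FreeL p d)} (f : Polynomial (ZMod p))
    {z : FreeLam p d} (hz : z ∈ Sprime p d Msub) : f • z ∈ Sprime p d Msub := by
  let fsmul : FreeLam p d →ₗ[ZMod p] FreeLam p d :=
    { toFun := fun z => f • z
      map_add' := fun x y => smul_add f x y
      map_smul' := fun c x => smul_comm f c x }
  have hmap : (Sprime p d Msub).map fsmul ≤ Sprime p d Msub := by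
    rw [Sprime, Submodule.map_iSup]
    refine iSup_le fun km => ?_
    rintro z ⟨w, ⟨x, hx, rfl⟩, rfl⟩
    have : fsmul (tauK p d km.1 x) = (f * X ^ km.1) ⊗ₜ[ZMod p] x := by
      simp only [fsmul, LinearMap.coe_mk, AddHom.coe_mk, tauK_apply]
      rw [TensorProduct.smul_tmul', smul_eq_mul]
    rw [this]
    exact tmul_mem_Sprime_of_inf p d hx _
  exact hmap ⟨z, hz, rfl⟩

lemma lieSpan_le_Sprime (M : LieSubalgebra (ZMod p) (FreeL p d))
    (hgr : M.toSubmodule ≤ ⨆ m : ℕ, M.toSubmodule ⊓ Lcomp p d m) :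
    (Submodule.restrictScalars (ZMod p)
      (LieSubalgebra.lieSpan (Polynomial (ZMod p)) (FreeLam p d)
        { z : FreeLam p d | ∃ x ∈ M, z = (1 : Polynomial (ZMod p)) ⊗ₜ[ZMod p] x }).toSubmodule) ≤
      Sprime p d M.toSubmodule := by
  -- first: the `F_p[π]`-span of the generating set is already a Lie subalgebra
  set genSet : Set (FreeLam p d) :=
    { z : FreeLam p d | ∃ x ∈ M, z = (1 : Polynomial (ZMod p)) ⊗ₜ[ZMod p] x } with hgen
  have hlie : ∀ z₁ ∈ Submodule.span (Polynomial (ZMod p)) genSet,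
      ∀ z₂ ∈ Submodule.span (Polynomial (ZMod p)) genSet,
        ⁅z₁, z₂⁆ ∈ Submodule.span (Polynomial (ZMod p)) genSet := by
    intro z₁ hz₁ z₂ hz₂
    induction hz₁ using Submodule.span_induction with
    | mem z hz =>
      induction hz₂ using Submodule.span_induction with
      | mem w hw =>
        obtain ⟨x, hx, rfl⟩ := hz
        obtain ⟨y, hy, rfl⟩ := hw
        rw [LieAlgebra.ExtendScalars.bracket_tmul, one_mul]
        exact Submodule.subset_span ⟨⁅x, y⁆, M.lie_mem hx hy, rfl⟩
      | zero =>
        rw [show ⁅z, (0 : FreeLam p d)⁆ = 0 from lie_zero z]; exact zero_mem _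
      | add w₁ w₂ _ _ h1 h2 =>
        rw [show ⁅z, w₁ + w₂⁆ = ⁅z, w₁⁆ + ⁅z, w₂⁆ from lie_add z w₁ w₂]; exact add_mem h1 h2
      | smul c w _ h1 =>
        rw [show ⁅z, c • w⁆ = c • ⁅z, w⁆ from lie_smul c z w]; exact Submodule.smul_mem _ _ h1
    | zero =>
      rw [show ⁅(0 : FreeLam p d), z₂⁆ = 0 from zero_lie z₂]; exact zero_mem _
    | add w₁ w₂ _ _ h1 h2 =>
      rw [show ⁅w₁ + w₂, z₂⁆ = ⁅w₁, z₂⁆ + ⁅w₂, z₂⁆ from add_lie w₁ w₂ z₂]; exact add_mem h1 h2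
    | smul c w _ h1 =>
      rw [show ⁅c • w, z₂⁆ = c • ⁅w, z₂⁆ from smul_lie c w z₂]; exact Submodule.smul_mem _ _ h1
  let K : LieSubalgebra (Polynomial (ZMod p)) (FreeLam p d) :=
    { Submodule.span (Polynomial (ZMod p)) genSet with
      lie_mem' := fun {x y} hx hy => hlie x hx y hy }
  have hKle : LieSubalgebra.lieSpan (Polynomial (ZMod p)) (FreeLam p d) genSet ≤ K :=
    LieSubalgebra.lieSpan_le.2 (fun z hz => Submodule.subset_span hz)
  intro z hz
  have hz2 : z ∈ Submodule.span (Polynomial (ZMod p)) genSet := hKle hz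
  clear hz
  induction hz2 using Submodule.span_induction with
  | mem z hz =>
    obtain ⟨x, hx, rfl⟩ := hz
    exact tmul_mem_Sprime p d hgr hx 1
  | zero => exact zero_mem _
  | add w₁ w₂ _ _ h1 h2 => exact add_mem h1 h2
  | smul c w _ h1 => exact smul_mem_Sprime p d c h1

/-- The numerator bound (F1). -/
lemma num_le_sum_b (n : ℕ) (M : LieSubalgebra (ZMod p) (FreeL p d))
    (hgr : M.toSubmodule ≤ ⨆ m : ℕ, M.toSubmodule ⊓ Lcomp p d m) :
    finrank (ZMod p) ↥((Submodule.restrictScalars (ZMod p)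
      (LieSubalgebra.lieSpan (Polynomial (ZMod p)) (FreeLam p d)
        { z : FreeLam p d | ∃ x ∈ M, z = (1 : Polynomial (ZMod p)) ⊗ₜ[ZMod p] x }).toSubmodule).map
          (Ipiece p d n).mkQ) ≤
    ∑ j ∈ Finset.range n, ∑ m ∈ Finset.range (j + 1),
      finrank (ZMod p) ↥(M.toSubmodule ⊓ Lcomp p d m) := by
  classical
  set Msub := M.toSubmodule with hMsub
  have hle1 := lieSpan_le_Sprime p d M hgr
  have hmapmono := Submodule.map_mono (f := (Ipiece p d n).mkQ) hle1
  have hstep1 : finrank (ZMod p) ↥((Submodule.restrictScalars (ZMod p)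
      (LieSubalgebra.lieSpan (Polynomial (ZMod p)) (FreeLam p d)
        { z : FreeLam p d | ∃ x ∈ M, z = (1 : Polynomial (ZMod p)) ⊗ₜ[ZMod p] x }).toSubmodule).map
          (Ipiece p d n).mkQ) ≤
      finrank (ZMod p) ↥((Sprime p d Msub).map (Ipiece p d n).mkQ) :=
    by
      haveI : FiniteDimensional (ZMod p) ↥((Sprime p d Msub).map (Ipiece p d n).mkQ) :=
        FiniteDimensional.finiteDimensional_submodule _
      exact Submodule.finrank_mono hmapmono
  refine le_trans hstep1 ?_
  -- the image of `S'` is contained in a finite sup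
  set Tn := (Finset.range n).sigma (fun j => Finset.range (j + 1)) with hTn
  set F : (Σ _ : ℕ, ℕ) → Submodule (ZMod p) (FreeLam p d ⧸ Ipiece p d n) :=
    fun x => ((Msub ⊓ Lcomp p d x.2).map (tauK p d (x.1 - x.2))).map (Ipiece p d n).mkQ with hF
  have hsup : (Sprime p d Msub).map (Ipiece p d n).mkQ ≤ Tn.sup F := by
    rw [Sprime, Submodule.map_iSup]
    refine iSup_le fun km => ?_
    rcases lt_or_ge (km.1 + km.2) n with hkm | hkm
    · have hmem : (⟨km.1 + km.2, km.2⟩ : Σ _ : ℕ, ℕ) ∈ Tn := by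
        rw [hTn]
        simp only [Finset.mem_sigma, Finset.mem_range]
        omega
      have heq : F ⟨km.1 + km.2, km.2⟩ =
          ((Msub ⊓ Lcomp p d km.2).map (tauK p d km.1)).map (Ipiece p d n).mkQ := by
        rw [hF]; simp only [Nat.add_sub_cancel]
      exact heq ▸ Finset.le_sup hmem
    · -- the piece dies in the quotient
      have hbot : ((Msub ⊓ Lcomp p d km.2).map (tauK p d km.1)).map (Ipiece p d n).mkQ = ⊥ := by
        rcases Nat.eq_zero_or_pos km.2 with hm0 | hm1
        · rw [Submodule.eq_bot_iff]
          rintro z ⟨w, ⟨x, hx, rfl⟩, rfl⟩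
          have : x ∈ Lcomp p d 0 := hm0 ▸ hx.2
          rw [Lcomp_zero, Submodule.mem_bot] at this
          subst this
          rw [map_zero, map_zero]
        · rw [Submodule.eq_bot_iff]
          rintro z ⟨w, ⟨x, hx, rfl⟩, rfl⟩
          rw [Submodule.mkQ_apply, Submodule.Quotient.mk_eq_zero]
          have h1 : tauK p d km.1 x ∈ Lamcomp p d (km.1 + km.2) :=
            tauK_Lcomp_le_Lamcomp p d hm1 ⟨x, hx.2, rfl⟩
          exact le_iSup₂ (f := fun n' (_ : n ≤ n') => Lamcomp p d n') (km.1 + km.2) hkm h1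
      rw [hbot]
      exact bot_le
  haveI : ∀ x : Σ _ : ℕ, ℕ, FiniteDimensional (ZMod p) ↥(F x) := fun x =>
    FiniteDimensional.finiteDimensional_submodule _
  haveI : FiniteDimensional (ZMod p) ↥(Tn.sup F) :=
    Submodule.finiteDimensional_finset_sup _ _
  refine le_trans (Submodule.finrank_mono hsup) ?_
  refine le_trans (finrank_finset_sup_le p Tn F) ?_
  rw [hTn, Finset.sum_sigma]
  refine Finset.sum_le_sum fun j _ => Finset.sum_le_sum fun m _ => ?_
  haveI : Module.Finite (ZMod p) ↥((Msub ⊓ Lcomp p d m).map (tauK p d (j - m))) :=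
    Module.Finite.map _ _
  calc finrank (ZMod p) ↥(F ⟨j, m⟩)
      ≤ finrank (ZMod p) ↥((Msub ⊓ Lcomp p d m).map (tauK p d (j - m))) :=
        Submodule.finrank_map_le _ _
    _ ≤ finrank (ZMod p) ↥(Msub ⊓ Lcomp p d m) := Submodule.finrank_map_le _ _

end Aux5

/-- **Lemma 2.5.** Let `L` be the non-abelian free `F_p`-Lie algebra on `d ≥ 2` generators,
regarded as an `F_p`-subalgebra of the free `F_p[π]`-Lie algebra `Λ` on the same generators
(via `x ↦ 1 ⊗ x`). Let `M` be a graded `F_p`-Lie subalgebra of `L` with strong density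
`dens_L(M) = 0`. Then the `F_p[π]`-Lie subalgebra `H` of `Λ` generated by `M` has strong
density `dens_Λ(H) = 0`. -/
theorem strong_density_zero_transfer
    (p d : ℕ) [Fact p.Prime] (hd : 2 ≤ d)
    (M : LieSubalgebra (ZMod p) (FreeL p d))
    (hgraded : M.toSubmodule = ⨆ n : ℕ, M.toSubmodule ⊓ Lcomp p d n)
    (hdens : Filter.Tendsto (densLRatio p d M.toSubmodule) Filter.atTop (nhds 0)) :
    Filter.Tendsto
      (densLamRatio p d
        (Submodule.restrictScalars (ZMod p)
          (LieSubalgebra.lieSpan (Polynomial (ZMod p)) (FreeLam p d)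
            { z : FreeLam p d | ∃ x ∈ M, z = (1 : Polynomial (ZMod p)) ⊗ₜ[ZMod p] x }).toSubmodule))
      Filter.atTop (nhds 0) := by
  classical
  have hgr : M.toSubmodule ≤ ⨆ m : ℕ, M.toSubmodule ⊓ Lcomp p d m := le_of_eq hgraded
  -- notation
  set a : ℕ → ℕ := fun m => Module.finrank (ZMod p) ↥(Lcomp p d m) with ha
  set b : ℕ → ℕ := fun m => Module.finrank (ZMod p) ↥(M.toSubmodule ⊓ Lcomp p d m) with hb
  set A : ℕ → ℕ := fun j => ∑ m ∈ Finset.range (j + 1), a m with hA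
  set B : ℕ → ℕ := fun j => ∑ m ∈ Finset.range (j + 1), b m with hB
  set r : ℕ → ℕ := fun n => Module.finrank (ZMod p) ↥(M.toSubmodule.map (Jpiece p d n).mkQ)
    with hr
  set c : ℕ → ℕ := fun n => Module.finrank (ZMod p) (FreeL p d ⧸ Jpiece p d n) with hc
  set num : ℕ → ℕ := fun n => Module.finrank (ZMod p) ↥((Submodule.restrictScalars (ZMod p)
      (LieSubalgebra.lieSpan (Polynomial (ZMod p)) (FreeLam p d)
        { z : FreeLam p d | ∃ x ∈ M, z = (1 : Polynomial (ZMod p)) ⊗ₜ[ZMod p] x }).toSubmodule).map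
          (Ipiece p d n).mkQ) with hnumdef
  set den : ℕ → ℕ := fun n => Module.finrank (ZMod p) (FreeLam p d ⧸ Ipiece p d n) with hdendef
  have hnum : ∀ n, num n ≤ ∑ j ∈ Finset.range n, B j := fun n => num_le_sum_b p d n M hgr
  have hden : ∀ n, ∑ j ∈ Finset.range n, A j ≤ den n := fun n => sum_a_le_den p d n
  have hBr : ∀ j, B j ≤ r (j + 1) := fun j => sum_b_le_r p d (j + 1) M.toSubmodule
  have hcA : ∀ j, c (j + 1) ≤ A j := fun j => c_le_sum_a p d (j + 1)
  have hrc : ∀ n, r n ≤ c n := fun n => Submodule.finrank_le _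
  have hA1 : ∀ j, 1 ≤ j → 1 ≤ A j := by
    intro j hj
    have h1 : a 1 ≤ A j :=
      Finset.single_le_sum (f := a) (fun m _ => Nat.zero_le _)
        (Finset.mem_range.2 (by omega))
    exact le_trans (one_le_a p d (by omega)) h1
  have hDn : ∀ n, n - 1 ≤ ∑ j ∈ Finset.range n, A j := by
    intro n
    have h1 : ∑ _j ∈ Finset.Ico 1 n, 1 ≤ ∑ j ∈ Finset.Ico 1 n, A j :=
      Finset.sum_le_sum fun j hj => hA1 j (Finset.mem_Ico.1 hj).1
    have h2 : ∑ j ∈ Finset.Ico 1 n, A j ≤ ∑ j ∈ Finset.range n, A j := by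
      rw [Finset.range_eq_Ico]
      exact Finset.sum_le_sum_of_subset (Finset.Ico_subset_Ico (Nat.zero_le _) le_rfl)
    have h0 : ∑ _j ∈ Finset.Ico 1 n, 1 = n - 1 := by
      rw [Finset.sum_const, Nat.card_Ico, smul_eq_mul, mul_one]
    omega
  rw [Metric.tendsto_atTop] at hdens ⊢
  intro ε hε
  have hε' : 0 < ε / 2 := by linarith
  obtain ⟨N₁, hN₁⟩ := hdens (ε / 2) hε'
  -- key: r n ≤ (ε/2) c n for n ≥ N₁
  have hkey : ∀ n, N₁ ≤ n → (r n : ℝ) ≤ ε / 2 * (c n : ℝ) := by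
    intro n hn
    have h := hN₁ n hn
    rw [Real.dist_eq, sub_zero] at h
    rcases Nat.eq_zero_or_pos (c n) with h0 | hpos
    · have hr0 : r n = 0 := Nat.le_zero.1 (h0 ▸ hrc n)
      simp [hr0, h0]
    · have hcpos : (0 : ℝ) < (c n : ℝ) := by exact_mod_cast hpos
      have hratio : densLRatio p d M.toSubmodule n < ε / 2 := lt_of_abs_lt h
      have hratio2 : (r n : ℝ) / (c n : ℝ) < ε / 2 := hratio
      have := (div_lt_iff₀ hcpos).1 hratio2
      linarith
  have hBA : ∀ j, N₁ ≤ j → ((B j : ℝ)) ≤ ε / 2 * (A j : ℝ) := by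
    intro j hj
    have h1 : (B j : ℝ) ≤ (r (j + 1) : ℝ) := by exact_mod_cast hBr j
    have h2 := hkey (j + 1) (by omega)
    have h3 : (c (j + 1) : ℝ) ≤ (A j : ℝ) := by exact_mod_cast hcA j
    calc (B j : ℝ) ≤ (r (j + 1) : ℝ) := h1
      _ ≤ ε / 2 * (c (j + 1) : ℝ) := h2
      _ ≤ ε / 2 * (A j : ℝ) := mul_le_mul_of_nonneg_left h3 (le_of_lt hε')
  set C : ℝ := ∑ j ∈ Finset.range N₁, (B j : ℝ) with hC
  have hC0 : 0 ≤ C := Finset.sum_nonneg fun j _ => Nat.cast_nonneg _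
  have hNn : ∀ n, N₁ ≤ n → ((∑ j ∈ Finset.range n, B j : ℕ) : ℝ) ≤
      C + ε / 2 * ((∑ j ∈ Finset.range n, A j : ℕ) : ℝ) := by
    intro n hn
    push_cast
    rw [← Finset.sum_range_add_sum_Ico (fun j => (B j : ℝ)) hn]
    have hIco : ∑ j ∈ Finset.Ico N₁ n, (B j : ℝ) ≤
        ε / 2 * ∑ j ∈ Finset.Ico N₁ n, (A j : ℝ) := by
      rw [Finset.mul_sum]
      refine Finset.sum_le_sum fun j hj => hBA j (Finset.mem_Ico.1 hj).1
    have hAsub : ∑ j ∈ Finset.Ico N₁ n, (A j : ℝ) ≤ ∑ j ∈ Finset.range n, (A j : ℝ) := by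
      rw [Finset.range_eq_Ico]
      exact Finset.sum_le_sum_of_subset_of_nonneg
        (Finset.Ico_subset_Ico (Nat.zero_le _) le_rfl)
        (fun j _ _ => Nat.cast_nonneg _)
    have := mul_le_mul_of_nonneg_left hAsub (le_of_lt hε')
    linarith
  set N₂ : ℕ := ⌈C / (ε / 2)⌉₊ + 2 with hN₂
  refine ⟨max N₁ N₂, fun n hn => ?_⟩
  have hn1 : N₁ ≤ n := le_trans (le_max_left _ _) hn
  have hn2 : N₂ ≤ n := le_trans (le_max_right _ _) hn
  -- denominator is large
  have hdenlarge : (⌈C / (ε / 2)⌉₊ + 1 : ℕ) ≤ den n := by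
    have h1 : n - 1 ≤ den n := le_trans (hDn n) (hden n)
    omega
  have hdenpos : (0 : ℝ) < (den n : ℝ) := by
    have : (1 : ℕ) ≤ den n := by omega
    exact_mod_cast Nat.lt_of_lt_of_le Nat.zero_lt_one this
  have hCden : C / (den n : ℝ) < ε / 2 := by
    have h2 : C / (ε / 2) < (den n : ℝ) := by
      have h3 : C / (ε / 2) ≤ (⌈C / (ε / 2)⌉₊ : ℝ) := Nat.le_ceil _
      have h4 : ((⌈C / (ε / 2)⌉₊ : ℕ) : ℝ) < ((⌈C / (ε / 2)⌉₊ + 1 : ℕ) : ℝ) := by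
        exact_mod_cast Nat.lt_succ_self _
      have h5 : ((⌈C / (ε / 2)⌉₊ + 1 : ℕ) : ℝ) ≤ (den n : ℝ) := by exact_mod_cast hdenlarge
      linarith
    rw [div_lt_iff₀ hdenpos]
    have h6 := mul_lt_mul_of_pos_right h2 hε'
    rw [div_mul_cancel₀ C (ne_of_gt hε')] at h6
    linarith
  -- final estimate
  have hratio_nonneg : 0 ≤ densLamRatio p d (Submodule.restrictScalars (ZMod p)
      (LieSubalgebra.lieSpan (Polynomial (ZMod p)) (FreeLam p d)
        { z : FreeLam p d | ∃ x ∈ M, z = (1 : Polynomial (ZMod p)) ⊗ₜ[ZMod p] x }).toSubmodule) n :=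
    div_nonneg (Nat.cast_nonneg _) (Nat.cast_nonneg _)
  rw [Real.dist_eq, sub_zero, abs_of_nonneg hratio_nonneg]
  have hub : densLamRatio p d (Submodule.restrictScalars (ZMod p)
      (LieSubalgebra.lieSpan (Polynomial (ZMod p)) (FreeLam p d)
        { z : FreeLam p d | ∃ x ∈ M, z = (1 : Polynomial (ZMod p)) ⊗ₜ[ZMod p] x }).toSubmodule) n ≤
      C / (den n : ℝ) + ε / 2 := by
    have hnum1 : (num n : ℝ) ≤ C + ε / 2 * (den n : ℝ) := by
      have h1 : (num n : ℝ) ≤ ((∑ j ∈ Finset.range n, B j : ℕ) : ℝ) := by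
        exact_mod_cast hnum n
      have h2 := hNn n hn1
      have h3 : ((∑ j ∈ Finset.range n, A j : ℕ) : ℝ) ≤ (den n : ℝ) := by
        exact_mod_cast hden n
      have h4 := mul_le_mul_of_nonneg_left h3 (le_of_lt hε')
      linarith
    have : densLamRatio p d (Submodule.restrictScalars (ZMod p)
        (LieSubalgebra.lieSpan (Polynomial (ZMod p)) (FreeLam p d)
          { z : FreeLam p d | ∃ x ∈ M, z = (1 : Polynomial (ZMod p)) ⊗ₜ[ZMod p] x }).toSubmodule) n =
        (num n : ℝ) / (den n : ℝ) := rfl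
    rw [this, div_le_iff₀ hdenpos]
    have hexp : (C / (den n : ℝ) + ε / 2) * (den n : ℝ) = C + ε / 2 * (den n : ℝ) := by
      rw [add_mul, div_mul_cancel₀ C (ne_of_gt hdenpos)]
    rw [hexp]
    exact hnum1
  linarith [hub, hCden]
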